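/- Distributivity (measurement-free case): let {E_{i,δ} : δ∈Δ_i} be operator-valued functions on H over Δ_i for i = 1,...,n, and V a unitary operator acting only on H (no coin). Then the guarded composition of the families {V·E_{i,δ}} (pointwise left-composed with V) equals (I_{H_C} ⊗ V) composed with the guarded composition of {E_{i,δ}}: for all (δ_1,...,δ_n), F'(δ_1,...,δ_n) = (I_{H_C}⊗V)·F(δ_1,...,δ_n), where F' uses families {V E_{i,δ}} and F uses {E_{i,δ}}. -/

import Mathlib

noncomputable section
open scoped InnerProductSpace
open Finset

/-- Coordinate model of the tensor product `H_C ⊗ H` along a fixed orthonormal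
basis of the `n`-dimensional coin space `H_C`. -/
abbrev TensorSp (n : ℕ) (H : Type*) [NormedAddCommGroup H] [InnerProductSpace ℂ H] : Type _ :=
  PiLp 2 (fun _ : Fin n => H)

variable {n : ℕ} {H : Type*} [NormedAddCommGroup H] [InnerProductSpace ℂ H]

/-- the pure tensor `c ⊗ ψ`. -/
def pureTensor (c : EuclideanSpace ℂ (Fin n)) (ψ : H) : TensorSp n H :=
  WithLp.toLp 2 (fun i => c i • ψ)

/-- the block-diagonal operator `∑ᵢ |i⟩⟨i| ⊗ Uᵢ`, i.e. the guarded composition of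
the `Uᵢ` along the computational basis of the coin space. -/
def blockDiag (U : Fin n → (H →ₗ[ℂ] H)) : TensorSp n H →ₗ[ℂ] TensorSp n H where
  toFun x := WithLp.toLp 2 (fun i => U i (x i))
  map_add' x y := by ext i; simp [map_add]
  map_smul' c x := by ext i; simp [map_smul]

/-- `A ⊗ B` in the coordinate model, `A` acting on the coin space. -/
def tensorOp (A : EuclideanSpace ℂ (Fin n) →ₗ[ℂ] EuclideanSpace ℂ (Fin n))
    (B : H →ₗ[ℂ] H) : TensorSp n H →ₗ[ℂ] TensorSp n H where
  toFun x := WithLp.toLp 2 (fun i => ∑ b : Fin n, A (EuclideanSpace.single b 1) i • B (x b))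
  map_add' x y := by
    ext i; simp [map_add, smul_add, Finset.sum_add_distrib]
  map_smul' c x := by
    ext i; simp [map_smul, Finset.smul_sum, smul_comm c]

/-- `A ⊗ I_H`. -/
def tensorLeft (A : EuclideanSpace ℂ (Fin n) →ₗ[ℂ] EuclideanSpace ℂ (Fin n)) :
    TensorSp n H →ₗ[ℂ] TensorSp n H :=
  tensorOp A LinearMap.id

/-- A linear operator is unitary iff it preserves inner products and is bijective. -/
def IsUnitaryOp {E : Type*} [NormedAddCommGroup E] [InnerProductSpace ℂ E]
    (A : E →ₗ[ℂ] E) : Prop :=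
  (∀ x y : E, ⟪A x, A y⟫_ℂ = ⟪x, y⟫_ℂ) ∧ Function.Bijective A

/-- Positive (semidefinite) operator. -/
def IsPosOp {E : Type*} [NormedAddCommGroup E] [InnerProductSpace ℂ E]
    (A : E →ₗ[ℂ] E) : Prop :=
  ∀ x : E, (⟪x, A x⟫_ℂ).im = 0 ∧ 0 ≤ (⟪x, A x⟫_ℂ).re

/-- Löwner order `A ⊑ B`. -/
def Loewner {E : Type*} [NormedAddCommGroup E] [InnerProductSpace ℂ E]
    (A B : E →ₗ[ℂ] E) : Prop :=
  IsPosOp (B - A)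

section guarded
variable [FiniteDimensional ℂ H] {Δ : Fin n → Type*} [∀ k, Fintype (Δ k)]

/-- the coefficients `λ_{kδ}`. -/
def lam (F : ∀ k, Δ k → (H →ₗ[ℂ] H)) (k : Fin n) (δ : Δ k) : ℝ :=
  Real.sqrt ((LinearMap.trace ℂ H (LinearMap.adjoint (F k δ) ∘ₗ F k δ)).re /
    ∑ τ : Δ k, (LinearMap.trace ℂ H (LinearMap.adjoint (F k τ) ∘ₗ F k τ)).re)

/-- the guarded composition `□ᵢ |i⟩ → Fᵢ` of operator-valued functions, evaluated at
`⊕ᵢ δᵢ`. -/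
def guardedComp (F : ∀ k, Δ k → (H →ₗ[ℂ] H)) (δ : ∀ k, Δ k) :
    TensorSp n H →ₗ[ℂ] TensorSp n H where
  toFun x := WithLp.toLp 2 (fun i => (∏ k ∈ Finset.univ.erase i, lam F k (δ k)) • F i (δ i) (x i))
  map_add' x y := by ext i; simp [map_add, smul_add]
  map_smul' c x := by
    ext i; simp [map_smul, smul_comm c]

end guarded

/-- partial trace over the coin space of an operator on `H_C ⊗ H`. -/
def coinProj (i : Fin n) : TensorSp n H →ₗ[ℂ] H where
  toFun x := x i
  map_add' _ _ := rfl
  map_smul' _ _ := rfl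

def coinIncl (i : Fin n) : H →ₗ[ℂ] TensorSp n H where
  toFun ψ := WithLp.toLp 2 (Pi.single i ψ)
  map_add' x y := by ext j; simp [Pi.single_apply]; split_ifs <;> simp
  map_smul' c x := by ext j; by_cases h : j = i <;> simp [Pi.single_apply, h]

def trCoin (A : TensorSp n H →ₗ[ℂ] TensorSp n H) : H →ₗ[ℂ] H :=
  ∑ i : Fin n, coinProj i ∘ₗ A ∘ₗ coinIncl i

/-- the outer product `|x⟩⟨y|`. -/
def outer {E : Type*} [NormedAddCommGroup E] [InnerProductSpace ℂ E]
    (x y : E) : E →ₗ[ℂ] E :=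
  ((innerSL ℂ y).toLinearMap).smulRight x


/-- distributivity (measurement-free case) — the guarded composition of
the families `{V·E_{i,δ}}` equals `(I ⊗ V)` composed with the guarded composition of
the families `{E_{i,δ}}`. -/
theorem guardedComp_distrib {n : ℕ} {H : Type*} [NormedAddCommGroup H]
    [InnerProductSpace ℂ H] [FiniteDimensional ℂ H]
    {Δ : Fin n → Type*} [∀ k, Fintype (Δ k)] (E : ∀ k, Δ k → (H →ₗ[ℂ] H))
    (hovf : ∀ k, Loewner (∑ δ : Δ k, LinearMap.adjoint (E k δ) ∘ₗ E k δ) LinearMap.id)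
    (V : H →ₗ[ℂ] H) (hV : IsUnitaryOp V) :
    ∀ δ : (∀ k, Δ k),
      guardedComp (fun k d => V ∘ₗ E k d) δ
        = blockDiag (fun _ : Fin n => V) ∘ₗ guardedComp E δ := by
  intro δ
  have hVV : LinearMap.adjoint V ∘ₗ V = LinearMap.id := by
    apply LinearMap.ext
    intro y
    apply ext_inner_left ℂ
    intro x
    simp only [LinearMap.comp_apply, LinearMap.id_apply]
    rw [LinearMap.adjoint_inner_right]
    exact hV.1 x y
  have key : ∀ (k : Fin n) (d : Δ k),
      LinearMap.adjoint (V ∘ₗ E k d) ∘ₗ (V ∘ₗ E k d)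
        = LinearMap.adjoint (E k d) ∘ₗ E k d := by
    intro k d
    rw [LinearMap.adjoint_comp]
    apply LinearMap.ext
    intro y
    simp only [LinearMap.comp_apply]
    congr 1
    have := congrArg (fun f => f (E k d y)) hVV
    simpa using this
  have hlam : lam (fun k d => V ∘ₗ E k d) = lam E := by
    funext k d
    unfold lam
    simp only [key]
  apply LinearMap.ext
  intro x
  ext i
  show (∏ k ∈ Finset.univ.erase i, lam (fun k d => V ∘ₗ E k d) k (δ k)) • (V ∘ₗ E i (δ i)) (x i)
      = V ((∏ k ∈ Finset.univ.erase i, lam E k (δ k)) • E i (δ i) (x i))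
  rw [hlam, LinearMap.map_smul_of_tower]
  rfl
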